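/- Any two distinct points in a Hilbert geometry have a Hilbert midpoint: for a nonempty bounded open convex set K ⊂ ℝⁿ and x ≠ y in K, there exists a unique point m on the open segment from x to y with d_K(x,m) = d_K(m,y). -/

import Mathlib

open scoped Classical

/-- The Hilbert distance of a set `K ⊆ ℝⁿ` at `x, y`: parametrizing the line through
`x, y` as `t ↦ x + t•(y−x)` (so `x` at `t = 0`, `y` at `t = 1`), the boundary points
are `a` at `S = sInf {t | x + t•(y−x) ∈ K}` and `b` at `T = sSup {t | x + t•(y−x) ∈ K}`,
and `d_K(x,y) = (1/2)·log((|y−a|/|x−a|)·(|x−b|/|y−b|))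
             = (1/2)·log(((1−S)/(−S))·(T/(T−1)))`. -/
noncomputable def hilbertDist {n : ℕ} (K : Set (EuclideanSpace ℝ (Fin n)))
    (x y : EuclideanSpace ℝ (Fin n)) : ℝ :=
  if x = y then 0
  else
    (1 / 2) * Real.log
      (((1 - sInf {t : ℝ | x + t • (y - x) ∈ K}) / (0 - sInf {t : ℝ | x + t • (y - x) ∈ K})) *
        (sSup {t : ℝ | x + t • (y - x) ∈ K} / (sSup {t : ℝ | x + t • (y - x) ∈ K} - 1)))

private lemma sq_eq_of_nonneg' {p q : ℝ} (hp : 0 ≤ p) (hq : 0 ≤ q) (h : p ^ 2 = q ^ 2) :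
    p = q :=
  le_antisymm (by nlinarith) (by nlinarith)

private lemma sInf_affine' {A : Set ℝ} (hne : A.Nonempty) (hbd : BddBelow A)
    (c r : ℝ) (hr : 0 < r) : sInf {t : ℝ | c + r * t ∈ A} = (sInf A - c) / r := by
  have himg : {t : ℝ | c + r * t ∈ A} = (fun u => (u - c) / r) '' A := by
    ext t
    simp only [Set.mem_setOf_eq, Set.mem_image]
    constructor
    · intro h; exact ⟨c + r * t, h, by field_simp; ring⟩
    · rintro ⟨u, hu, rfl⟩
      have : c + r * ((u - c) / r) = u := by field_simp; ring
      rw [this]; exact hu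
  have hmono : Monotone (fun u : ℝ => (u - c) / r) := fun p q hpq =>
    div_le_div_of_nonneg_right (sub_le_sub_right hpq c) hr.le
  have hcont : ContinuousAt (fun u : ℝ => (u - c) / r) (sInf A) := by fun_prop
  rw [himg, ← hmono.map_csInf_of_continuousAt hcont hne hbd]

private lemma sSup_affine' {A : Set ℝ} (hne : A.Nonempty) (hbd : BddAbove A)
    (c r : ℝ) (hr : 0 < r) : sSup {t : ℝ | c + r * t ∈ A} = (sSup A - c) / r := by
  have himg : {t : ℝ | c + r * t ∈ A} = (fun u => (u - c) / r) '' A := by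
    ext t
    simp only [Set.mem_setOf_eq, Set.mem_image]
    constructor
    · intro h; exact ⟨c + r * t, h, by field_simp; ring⟩
    · rintro ⟨u, hu, rfl⟩
      have : c + r * ((u - c) / r) = u := by field_simp; ring
      rw [this]; exact hu
  have hmono : Monotone (fun u : ℝ => (u - c) / r) := fun p q hpq =>
    div_le_div_of_nonneg_right (sub_le_sub_right hpq c) hr.le
  have hcont : ContinuousAt (fun u : ℝ => (u - c) / r) (sSup A) := by fun_prop
  rw [himg, ← hmono.map_csSup_of_continuousAt hcont hne hbd]

/-- Any two distinct points of a Hilbert geometry have a unique Hilbert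
midpoint on the open segment joining them. -/
theorem hilbert_midpoint_exists_unique {n : ℕ} (K : Set (EuclideanSpace ℝ (Fin n)))
    (hne : K.Nonempty) (hbd : Bornology.IsBounded K) (hop : IsOpen K) (hcv : Convex ℝ K)
    (x y : EuclideanSpace ℝ (Fin n)) (hx : x ∈ K) (hy : y ∈ K) (hxy : x ≠ y) :
    ∃! m : EuclideanSpace ℝ (Fin n),
      m ∈ openSegment ℝ x y ∧ hilbertDist K x m = hilbertDist K m y := by
  obtain ⟨v, hv_eq⟩ : ∃ v : EuclideanSpace ℝ (Fin n), v = y - x := ⟨_, rfl⟩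
  have hv : v ≠ 0 := by rw [hv_eq]; exact sub_ne_zero.mpr (Ne.symm hxy)
  obtain ⟨A, hA_def⟩ : ∃ A : Set ℝ, A = {t : ℝ | x + t • v ∈ K} := ⟨_, rfl⟩
  have h0A : (0 : ℝ) ∈ A := by
    rw [hA_def, Set.mem_setOf_eq, zero_smul, add_zero]; exact hx
  have h1A : (1 : ℝ) ∈ A := by
    have h : x + (1 : ℝ) • v = y := by rw [hv_eq, one_smul]; abel
    rw [hA_def, Set.mem_setOf_eq, h]; exact hy
  have hAne : A.Nonempty := ⟨0, h0A⟩
  have hAopen : IsOpen A := by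
    have hc : Continuous (fun t : ℝ => x + t • v) := by fun_prop
    rw [hA_def]; exact hop.preimage hc
  obtain ⟨R, hR⟩ := isBounded_iff_forall_norm_le.mp hbd
  have hvpos : 0 < ‖v‖ := norm_pos_iff.mpr hv
  have hbound : ∀ t ∈ A, |t| ≤ (R + ‖x‖) / ‖v‖ := by
    intro t ht
    rw [hA_def, Set.mem_setOf_eq] at ht
    have h1 : ‖x + t • v‖ ≤ R := hR _ ht
    have h3 : ‖t • v‖ = ‖(x + t • v) - x‖ := by congr 1; abel
    rw [norm_smul, Real.norm_eq_abs] at h3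
    have h4 : ‖(x + t • v) - x‖ ≤ ‖x + t • v‖ + ‖x‖ := norm_sub_le _ _
    rw [le_div_iff₀ hvpos]
    calc |t| * ‖v‖ = ‖(x + t • v) - x‖ := h3
      _ ≤ ‖x + t • v‖ + ‖x‖ := h4
      _ ≤ R + ‖x‖ := by linarith
  have hbbA : BddBelow A := ⟨-((R + ‖x‖) / ‖v‖), fun t ht => (abs_le.mp (hbound t ht)).1⟩
  have hbaA : BddAbove A := ⟨(R + ‖x‖) / ‖v‖, fun t ht => (abs_le.mp (hbound t ht)).2⟩
  obtain ⟨S, hS_def⟩ : ∃ S : ℝ, S = sInf A := ⟨_, rfl⟩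
  obtain ⟨T, hT_def⟩ : ∃ T : ℝ, T = sSup A := ⟨_, rfl⟩
  obtain ⟨ε, hε, hball⟩ := Metric.isOpen_iff.mp hAopen 0 h0A
  have hSneg : S < 0 := by
    have hmem : -(ε / 2) ∈ A := hball (by
      rw [Metric.mem_ball, Real.dist_eq]
      rw [show |(-(ε / 2) - 0 : ℝ)| = ε / 2 by rw [sub_zero, abs_neg, abs_of_nonneg (by linarith)]]
      linarith)
    have := csInf_le hbbA hmem
    rw [← hS_def] at this
    linarith
  obtain ⟨δ, hδ, hball1⟩ := Metric.isOpen_iff.mp hAopen 1 h1A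
  have hT1 : 1 < T := by
    have hmem : 1 + δ / 2 ∈ A := hball1 (by
      rw [Metric.mem_ball, Real.dist_eq]
      rw [show |(1 + δ / 2 - 1 : ℝ)| = δ / 2 by rw [show (1 + δ / 2 - 1 : ℝ) = δ / 2 by ring,
        abs_of_nonneg (by linarith)]]
      linarith)
    have := le_csSup hbaA hmem
    rw [← hT_def] at this
    linarith
  have hT0 : 0 < T := by linarith
  have h1S : 0 < 1 - S := by linarith
  have hnS : 0 < -S := by linarith
  have hTm1 : 0 < T - 1 := by linarith
  set a := Real.sqrt (T * (T - 1)) with ha_def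
  set b := Real.sqrt ((-S) * (1 - S)) with hb_def
  have ha : 0 < a := Real.sqrt_pos.mpr (mul_pos hT0 hTm1)
  have hb : 0 < b := Real.sqrt_pos.mpr (mul_pos hnS h1S)
  have ha2 : a ^ 2 = T * (T - 1) := Real.sq_sqrt (mul_pos hT0 hTm1).le
  have hb2 : b ^ 2 = (-S) * (1 - S) := Real.sq_sqrt (mul_pos hnS h1S).le
  have hab : 0 < a + b := by linarith
  -- key characterization of the midpoint equation on the segment
  have key : ∀ s : ℝ, 0 < s → s < 1 →
      ((hilbertDist K x (x + s • v) = hilbertDist K (x + s • v) y) ↔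
        (s - S) * a = (T - s) * b) := by
    intro s hs0 hs1
    have hsS : 0 < s - S := by linarith
    have hTs : 0 < T - s := by linarith
    have h1s : 0 < 1 - s := by linarith
    have h1s' : (1 : ℝ) - s ≠ 0 := h1s.ne'
    have hs' : s ≠ 0 := hs0.ne'
    have hxm : x ≠ x + s • v := by
      intro h
      rcases smul_eq_zero.mp (left_eq_add.mp h) with h'' | h''
      · exact hs0.ne' h''
      · exact hv h''
    have hmy : x + s • v ≠ y := by
      intro h
      have hsv : s • v = v := by
        have h3 : x + s • v = x + v := by rw [h, hv_eq]; abel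
        exact add_left_cancel h3
      have h2 : (1 - s) • v = 0 := by rw [sub_smul, one_smul, hsv, sub_self]
      rcases smul_eq_zero.mp h2 with h'' | h''
      · have : (1 : ℝ) - s = 0 := h''
        linarith
      · exact hv h''
    have hset1 : {t : ℝ | x + t • ((x + s • v) - x) ∈ K} = {t : ℝ | (0 : ℝ) + s * t ∈ A} := by
      ext t
      have hvec : x + t • ((x + s • v) - x) = x + ((0 : ℝ) + s * t) • v := by
        rw [add_sub_cancel_left, smul_smul, zero_add, mul_comm]
      rw [Set.mem_setOf_eq, Set.mem_setOf_eq, hvec, hA_def, Set.mem_setOf_eq]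
    have hset2 : {t : ℝ | (x + s • v) + t • (y - (x + s • v)) ∈ K} =
        {t : ℝ | s + (1 - s) * t ∈ A} := by
      ext t
      have hym : y - (x + s • v) = (1 - s) • v := by
        rw [hv_eq, sub_smul, one_smul]; abel
      have hvec : (x + s • v) + t • ((1 - s) • v) = x + (s + (1 - s) * t) • v := by
        rw [smul_smul, mul_comm t (1 - s), add_smul]; abel
      rw [Set.mem_setOf_eq, Set.mem_setOf_eq, hym, hvec, hA_def, Set.mem_setOf_eq]
    have hi1 : sInf {t : ℝ | x + t • ((x + s • v) - x) ∈ K} = S / s := by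
      rw [hset1, sInf_affine' hAne hbbA 0 s hs0, ← hS_def, sub_zero]
    have hsup1 : sSup {t : ℝ | x + t • ((x + s • v) - x) ∈ K} = T / s := by
      rw [hset1, sSup_affine' hAne hbaA 0 s hs0, ← hT_def, sub_zero]
    have hi2 : sInf {t : ℝ | (x + s • v) + t • (y - (x + s • v)) ∈ K} = (S - s) / (1 - s) := by
      rw [hset2, sInf_affine' hAne hbbA s (1 - s) h1s, ← hS_def]
    have hsup2 : sSup {t : ℝ | (x + s • v) + t • (y - (x + s • v)) ∈ K} = (T - s) / (1 - s) := by
      rw [hset2, sSup_affine' hAne hbaA s (1 - s) h1s, ← hT_def]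
    have e1 : hilbertDist K x (x + s • v) =
        (1 / 2) * Real.log (((s - S) * T) / ((-S) * (T - s))) := by
      rw [hilbertDist, if_neg hxm, hi1, hsup1]
      congr 2
      rw [show (1 : ℝ) - S / s = (s - S) / s from by field_simp,
        show (0 : ℝ) - S / s = (-S) / s from by ring,
        show T / s - 1 = (T - s) / s from by field_simp,
        div_div_div_cancel_right₀ hs', div_div_div_cancel_right₀ hs', div_mul_div_comm]
    have e2 : hilbertDist K (x + s • v) y =
        (1 / 2) * Real.log (((1 - S) * (T - s)) / ((s - S) * (T - 1))) := by
      rw [hilbertDist, if_neg hmy, hi2, hsup2]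
      congr 2
      rw [show (1 : ℝ) - (S - s) / (1 - s) = (1 - S) / (1 - s) from by field_simp; ring,
        show (0 : ℝ) - (S - s) / (1 - s) = (s - S) / (1 - s) from by field_simp; ring,
        show (T - s) / (1 - s) - 1 = (T - 1) / (1 - s) from by field_simp; ring,
        div_div_div_cancel_right₀ h1s', div_div_div_cancel_right₀ h1s', div_mul_div_comm]
    have hpos1 : 0 < ((s - S) * T) / ((-S) * (T - s)) :=
      div_pos (mul_pos hsS hT0) (mul_pos hnS hTs)
    have hpos2 : 0 < ((1 - S) * (T - s)) / ((s - S) * (T - 1)) :=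
      div_pos (mul_pos h1S hTs) (mul_pos hsS hTm1)
    rw [e1, e2]
    constructor
    · intro h
      have hlog : Real.log (((s - S) * T) / ((-S) * (T - s))) =
          Real.log (((1 - S) * (T - s)) / ((s - S) * (T - 1))) := by linarith
      have hargs : ((s - S) * T) / ((-S) * (T - s)) =
          ((1 - S) * (T - s)) / ((s - S) * (T - 1)) := by
        rw [← Real.exp_log hpos1, ← Real.exp_log hpos2, hlog]
      have h' := (div_eq_div_iff (mul_pos hnS hTs).ne' (mul_pos hsS hTm1).ne').mp hargs
      have hsq : (s - S) ^ 2 * (T * (T - 1)) = (T - s) ^ 2 * ((-S) * (1 - S)) := by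
        linear_combination h'
      apply sq_eq_of_nonneg' (mul_nonneg hsS.le ha.le) (mul_nonneg hTs.le hb.le)
      rw [mul_pow, mul_pow, ha2, hb2]
      exact hsq
    · intro h
      have hsq : (s - S) ^ 2 * (T * (T - 1)) = (T - s) ^ 2 * ((-S) * (1 - S)) := by
        rw [← ha2, ← hb2]
        have := congrArg (· ^ 2) h
        simpa [mul_pow] using this
      have hargs : ((s - S) * T) / ((-S) * (T - s)) =
          ((1 - S) * (T - s)) / ((s - S) * (T - 1)) := by
        rw [div_eq_div_iff (mul_pos hnS hTs).ne' (mul_pos hsS hTm1).ne']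
        linear_combination hsq
      rw [hargs]
  -- the midpoint parameter
  set s₀ := (T * b + S * a) / (a + b) with hs₀_def
  have hs₀0 : 0 < s₀ := by
    apply div_pos ?_ hab
    have h1 : ((-S) * a) ^ 2 < (T * b) ^ 2 := by
      rw [mul_pow, mul_pow, ha2, hb2]
      nlinarith [mul_pos (mul_pos hT0 hnS) (show (0:ℝ) < T - S by linarith)]
    have h2 : (-S) * a < T * b :=
      lt_of_pow_lt_pow_left₀ 2 (mul_pos hT0 hb).le h1
    linarith
  have hs₀1 : s₀ < 1 := by
    rw [hs₀_def, div_lt_one hab]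
    have h1 : ((T - 1) * b) ^ 2 < ((1 - S) * a) ^ 2 := by
      rw [mul_pow, mul_pow, ha2, hb2]
      nlinarith [mul_pos (mul_pos hTm1 h1S) (show (0:ℝ) < T - S by linarith)]
    have h2 : (T - 1) * b < (1 - S) * a :=
      lt_of_pow_lt_pow_left₀ 2 (mul_pos h1S ha).le h1
    linarith
  have hs₀eq : (s₀ - S) * a = (T - s₀) * b := by
    have h1 : s₀ * (a + b) = T * b + S * a := by
      rw [hs₀_def, div_mul_cancel₀ _ hab.ne']
    linear_combination h1
  refine ⟨x + s₀ • v, ⟨?_, (key s₀ hs₀0 hs₀1).mpr hs₀eq⟩, ?_⟩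
  · rw [openSegment_eq_image', hv_eq]
    exact ⟨s₀, ⟨hs₀0, hs₀1⟩, rfl⟩
  · rintro m ⟨hmseg, hmdist⟩
    rw [openSegment_eq_image'] at hmseg
    obtain ⟨s, ⟨hs0, hs1⟩, rfl⟩ := hmseg
    rw [← hv_eq] at hmdist ⊢
    have heq := (key s hs0 hs1).mp hmdist
    have hs : s = s₀ := by
      rw [hs₀_def, eq_div_iff hab.ne']
      linear_combination heq
    rw [hs]
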